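/- Let u, v ∈ ℂⁿ, let p ∈ ℝⁿ be a probability distribution with p(i) ≥ |u(i)|²/(φ‖u‖²) for all i, and let Z be the random variable obtained by sampling index i from p and setting Z := u(i)*·v(i)/p(i) (with the convention 0/0 = 0). Then E[Z] = ⟨u,v⟩ and E[|Z|²] ≤ φ‖u‖²‖v‖². -/

import Mathlib

open BigOperators

/-- Single-sample inner product estimator: sampling `i` from a `φ`-oversampled importance
sampling distribution `p` for `u` and setting `Z i := u(i)* v(i) / p(i)` gives an unbiased
estimator of `⟨u,v⟩` with second moment at most `φ‖u‖²‖v‖²`. -/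
theorem stmt5 {n : ℕ} (φ : ℝ) (hφ : 1 ≤ φ)
    (u v : Fin n → ℂ) (p : Fin n → ℝ)
    (hp0 : ∀ i, 0 ≤ p i) (hp1 : ∑ i, p i = 1)
    (hover : ∀ i, ‖u i‖ ^ 2 / (φ * ∑ j, ‖u j‖ ^ 2) ≤ p i)
    (Z : Fin n → ℂ) (hZ : ∀ i, Z i = starRingEnd ℂ (u i) * v i / (p i : ℂ)) :
    (∑ i, (p i : ℂ) * Z i = ∑ i, starRingEnd ℂ (u i) * v i) ∧
    (∑ i, p i * ‖Z i‖ ^ 2 ≤ φ * (∑ i, ‖u i‖ ^ 2) * (∑ i, ‖v i‖ ^ 2)) := by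
  set S : ℝ := ∑ j, ‖u j‖ ^ 2 with hS
  have hφ0 : 0 < φ := lt_of_lt_of_le one_pos hφ
  have hS0 : 0 ≤ S := Finset.sum_nonneg fun i _ => by positivity
  -- If p i = 0 then u i = 0
  have hkey : ∀ i, p i = 0 → u i = 0 := by
    intro i hpi
    have h := hover i
    rw [hpi] at h
    rcases eq_or_lt_of_le hS0 with hSeq | hSpos
    · have : ‖u i‖ ^ 2 ≤ S := Finset.single_le_sum (f := fun j => ‖u j‖ ^ 2)
        (fun j _ => by positivity) (Finset.mem_univ i)
      rw [← hSeq] at this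
      have : ‖u i‖ = 0 := by nlinarith [sq_nonneg ‖u i‖]
      exact norm_eq_zero.mp this
    · have hden : 0 < φ * S := mul_pos hφ0 hSpos
      have : ‖u i‖ ^ 2 ≤ 0 := by
        have := (div_nonpos_iff.mp (le_of_le_of_eq h rfl.symm))
        nlinarith [div_le_iff₀ hden |>.mp h, sq_nonneg ‖u i‖]
      have : ‖u i‖ = 0 := by nlinarith [sq_nonneg ‖u i‖]
      exact norm_eq_zero.mp this
  constructor
  · apply Finset.sum_congr rfl
    intro i _
    rw [hZ i]
    rcases eq_or_ne (p i) 0 with hpi | hpi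
    · rw [hkey i hpi, hpi]; simp
    · rw [mul_div_assoc']
      exact mul_div_cancel_left₀ _ (Complex.ofReal_ne_zero.mpr hpi)
  · have hterm : ∀ i ∈ Finset.univ, p i * ‖Z i‖ ^ 2 ≤ φ * S * ‖v i‖ ^ 2 := by
      intro i _
      rcases eq_or_ne (p i) 0 with hpi | hpi
      · rw [hpi, zero_mul]; positivity
      · have hpip : 0 < p i := lt_of_le_of_ne (hp0 i) (Ne.symm hpi)
        rcases eq_or_ne (u i) 0 with hui | hui
        · have hz : Z i = 0 := by rw [hZ i, hui]; simp
          rw [hz]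
          simp only [norm_zero, ne_eq, OfNat.ofNat_ne_zero, not_false_eq_true, zero_pow, mul_zero]
          positivity
        · have hSpos : 0 < S := by
            have : ‖u i‖ ^ 2 ≤ S := Finset.single_le_sum (f := fun j => ‖u j‖ ^ 2)
              (fun j _ => by positivity) (Finset.mem_univ i)
            have hu : 0 < ‖u i‖ ^ 2 := pow_pos (norm_pos_iff.mpr hui) 2
            linarith
          have hden : 0 < φ * S := mul_pos hφ0 hSpos
          have h1 : ‖u i‖ ^ 2 ≤ p i * (φ * S) := (div_le_iff₀ hden).mp (hover i)
          have hZn : ‖Z i‖ = ‖u i‖ * ‖v i‖ / p i := by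
            rw [hZ i, norm_div, norm_mul, RingHomIsometric.norm_map, Complex.norm_real, Real.norm_eq_abs,
              abs_of_pos hpip]
          rw [hZn]
          have : p i * (‖u i‖ * ‖v i‖ / p i) ^ 2 = ‖u i‖ ^ 2 * ‖v i‖ ^ 2 / p i := by
            field_simp
          rw [this, div_le_iff₀ hpip]
          nlinarith [sq_nonneg ‖v i‖]
    calc ∑ i, p i * ‖Z i‖ ^ 2 ≤ ∑ i, φ * S * ‖v i‖ ^ 2 := Finset.sum_le_sum hterm
      _ = φ * S * ∑ i, ‖v i‖ ^ 2 := by rw [← Finset.mul_sum]
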